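/- Let Ω ⊆ ℝⁿ, let D ∈ ℝ^{n×n} be symmetric positive semidefinite, let H : ℝⁿ → ℝ be convex, let J : ℝⁿ → ℝⁿ, and let t ≥ 0 be an integer. Let w⁰, w¹, …, w^{t+1} ∈ ℝⁿ and w̃⁰, …, w̃ᵗ ∈ Ω be such that for every k ∈ {0, …, t} and every w ∈ Ω: H(w) − H(w̃ᵏ) + ⟨w − w̃ᵏ, J(w)⟩ ≥ (1/2)·( (w − w^{k+1})ᵀD(w − w^{k+1}) − (w − wᵏ)ᵀD(w − wᵏ) ). Define w̃_t = (1/(t+1))·∑_{k=0}^{t} w̃ᵏ. Then for every w ∈ Ω: H(w̃_t) − H(w) + ⟨w̃_t − w, J(w)⟩ ≤ (1/(2(t+1)))·(w − w⁰)ᵀD(w − w⁰). -/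

import Mathlib

open Matrix

/-- Ergodic O(1/t) convergence rate of neADMM in the variational inequality framework:
if each predictor iterate `w̃ᵏ ∈ Ω` satisfies the per-iteration inequality against the
corrector iterates `wᵏ`, then the ergodic average `w̃_t = (1/(t+1))∑_{k=0}^t w̃ᵏ`
satisfies `H(w̃_t) − H(w) + ⟨w̃_t − w, J w⟩ ≤ ‖w − w⁰‖_D²/(2(t+1))` for all `w ∈ Ω`. -/
theorem neADMM_ergodic_rate {n : ℕ} (Ω : Set (Fin n → ℝ))
    (D : Matrix (Fin n) (Fin n) ℝ) (hD : D.PosSemidef)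
    (H : (Fin n → ℝ) → ℝ) (hH : ConvexOn ℝ Set.univ H)
    (J : (Fin n → ℝ) → (Fin n → ℝ)) (t : ℕ)
    (w wt : ℕ → (Fin n → ℝ))
    (hmem : ∀ k ≤ t, wt k ∈ Ω)
    (hiter : ∀ k ≤ t, ∀ v ∈ Ω,
      (1 / 2) * ((v - w (k + 1)) ⬝ᵥ (D *ᵥ (v - w (k + 1))) -
          (v - w k) ⬝ᵥ (D *ᵥ (v - w k))) ≤
        H v - H (wt k) + (v - wt k) ⬝ᵥ J v)
    (wavg : Fin n → ℝ)
    (hwavg : wavg = (1 / ((t : ℝ) + 1)) • ∑ k ∈ Finset.range (t + 1), wt k) :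
    ∀ v ∈ Ω, H wavg - H v + (wavg - v) ⬝ᵥ J v ≤
      (1 / (2 * ((t : ℝ) + 1))) * ((v - w 0) ⬝ᵥ (D *ᵥ (v - w 0))) := by
  intro v hv
  have hc : (0:ℝ) < (t:ℝ) + 1 := by positivity
  set Q : ℕ → ℝ := fun k => (v - w k) ⬝ᵥ (D *ᵥ (v - w k)) with hQ
  have htel : ∑ k ∈ Finset.range (t+1), ((1:ℝ)/2) * (Q (k+1) - Q k)
      = (1/2) * (Q (t+1) - Q 0) := by
    rw [← Finset.mul_sum, Finset.sum_range_sub]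
  have hQpos : 0 ≤ Q (t + 1) := hD.dotProduct_mulVec_nonneg (v - w (t+1))
  have hsum : -(1/2) * Q 0 ≤
      ∑ k ∈ Finset.range (t+1), (H v - H (wt k) + (v - wt k) ⬝ᵥ J v) := by
    have h1 : ∑ k ∈ Finset.range (t+1), ((1:ℝ)/2) * (Q (k+1) - Q k) ≤
        ∑ k ∈ Finset.range (t+1), (H v - H (wt k) + (v - wt k) ⬝ᵥ J v) := by
      refine Finset.sum_le_sum fun k hk => ?_
      exact hiter k (Nat.lt_succ_iff.mp (Finset.mem_range.mp hk)) v hv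
    rw [htel] at h1
    nlinarith
  have hwavg' : wavg = ∑ k ∈ Finset.range (t+1), (1/((t:ℝ)+1)) • wt k := by
    rw [hwavg, Finset.smul_sum]
  have hjen : H wavg ≤ ∑ k ∈ Finset.range (t+1), (1/((t:ℝ)+1)) * H (wt k) := by
    rw [hwavg']
    apply hH.map_sum_le
    · intro i _; positivity
    · rw [Finset.sum_const, Finset.card_range, nsmul_eq_mul]
      push_cast
      field_simp
    · intro i _; trivial
  have hsplit : (∑ k ∈ Finset.range (t+1), (1/((t:ℝ)+1)) • wt k) ⬝ᵥ J v
      = ∑ k ∈ Finset.range (t+1), (1/((t:ℝ)+1)) * (wt k ⬝ᵥ J v) := by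
    simp only [dotProduct, Finset.sum_apply, Finset.sum_mul, Finset.mul_sum,
      Pi.smul_apply, smul_eq_mul]
    rw [Finset.sum_comm]
    simp [Finset.mul_sum, mul_assoc]
  have hdot : (wavg - v) ⬝ᵥ J v =
      ∑ k ∈ Finset.range (t+1), (1/((t:ℝ)+1)) * ((wt k - v) ⬝ᵥ J v) := by
    rw [hwavg', sub_dotProduct, hsplit]
    simp only [sub_dotProduct, mul_sub, Finset.sum_sub_distrib, Finset.sum_const,
      Finset.card_range, nsmul_eq_mul]
    have h1 : ((t:ℝ)+1) * (1/((t:ℝ)+1) * (v ⬝ᵥ J v)) = v ⬝ᵥ J v := by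
      field_simp
    push_cast
    rw [h1]
  have hflip : ∀ k, (v - wt k) ⬝ᵥ J v = -((wt k - v) ⬝ᵥ J v) := by
    intro k
    rw [← neg_dotProduct, neg_sub]
  simp only [hflip] at hsum
  rw [Finset.sum_add_distrib, Finset.sum_sub_distrib, Finset.sum_const,
    Finset.card_range, nsmul_eq_mul, Finset.sum_neg_distrib] at hsum
  rw [hdot, ← Finset.mul_sum]
  rw [← Finset.mul_sum] at hjen
  push_cast at hsum
  set S1 := ∑ k ∈ Finset.range (t+1), H (wt k) with hS1
  set S2 := ∑ k ∈ Finset.range (t+1), ((wt k - v) ⬝ᵥ J v) with hS2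
  -- hsum : -(1/2) * Q 0 ≤ (t+1) * H v - S1 + -S2
  have hkey : S1 + S2 ≤ ((t:ℝ)+1) * H v + (1/2) * Q 0 := by linarith
  have hmul := mul_le_mul_of_nonneg_left hkey (le_of_lt (one_div_pos.mpr hc))
  have he1 : (1/((t:ℝ)+1)) * (((t:ℝ)+1) * H v + (1/2) * Q 0)
      = H v + (1/(2*((t:ℝ)+1))) * Q 0 := by
    field_simp
  have he2 : (1/((t:ℝ)+1)) * (S1 + S2)
      = (1/((t:ℝ)+1)) * S1 + (1/((t:ℝ)+1)) * S2 := by ring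
  rw [he1, he2] at hmul
  linarith
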